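/- For a finite connected directed weighted graph G satisfying the Kirchhoff assumption, with the normalized choice of vertex weight m = β⁺ (assuming β⁺(x) > 0 for all x), every eigenvalue of the normalized operator S̃_G = Δ̃_G + Δ̃*_G lies in the interval [0,4]. -/

import Mathlib

open Finset

noncomputable def innerM {V : Type*} [Fintype V] (m : V → ℝ) (f g : V → ℂ) : ℂ :=
  ∑ x, (m x : ℂ) * f x * (starRingEnd ℂ) (g x)

noncomputable def lapDelta {V : Type*} [Fintype V] (m : V → ℝ) (b : V → V → ℝ)
    (f : V → ℂ) (x : V) : ℂ :=
  (1 / (m x : ℂ)) * ∑ y, ((b x y : ℝ) : ℂ) * (f x - f y)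

lemma innerM_conj {V : Type*} [Fintype V] (m : V → ℝ) (f g : V → ℂ) :
    innerM m f g = (starRingEnd ℂ) (innerM m g f) := by
  simp only [innerM, map_sum, map_mul, Complex.conj_conj, Complex.conj_ofReal]
  exact Finset.sum_congr rfl fun x _ => by ring

lemma kirch_sum {V : Type*} [Fintype V] (b : V → V → ℝ)
    (hkirch : ∀ x, ∑ y, b x y = ∑ y, b y x) (g : V → ℝ) :
    ∑ x, ∑ y, b x y * g y = ∑ x, ∑ y, b x y * g x := by
  rw [Finset.sum_comm]
  calc ∑ y, ∑ x, b x y * g y = ∑ y, (∑ x, b x y) * g y := by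
        simp [Finset.sum_mul]
    _ = ∑ y, (∑ x, b y x) * g y := by
        refine Finset.sum_congr rfl fun y _ => by rw [(hkirch y)]
    _ = ∑ x, ∑ y, b x y * g x := by
        refine Finset.sum_congr rfl fun y _ => by rw [Finset.sum_mul]

theorem stmt7 {V : Type*} [Fintype V] (b : V → V → ℝ)
    (hb : ∀ x y, 0 ≤ b x y) (hloop : ∀ x, b x x = 0)
    (hconn : ∀ x y : V, Relation.ReflTransGen (fun u v => 0 < b u v ∨ 0 < b v u) x y)
    (hkirch : ∀ x, ∑ y, b x y = ∑ y, b y x)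
    (hpos : ∀ x, 0 < ∑ y, b x y)
    (T : (V → ℂ) → (V → ℂ))
    (hT : ∀ f g : V → ℂ,
      innerM (fun x => ∑ y, b x y) (lapDelta (fun x => ∑ y, b x y) b f) g =
        innerM (fun x => ∑ y, b x y) f (T g))
    (S : (V → ℂ) → (V → ℂ))
    (hS : ∀ f x, S f x = lapDelta (fun x => ∑ y, b x y) b f x + T f x) :
    ∀ mu : ℂ, (∃ f : V → ℂ, f ≠ 0 ∧ S f = fun x => mu * f x) →
      mu.im = 0 ∧ 0 ≤ mu.re ∧ mu.re ≤ 4 := by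
  rintro mu ⟨f, hf0, hfe⟩
  set m : V → ℝ := fun x => ∑ y, b x y with hm
  have hmne : ∀ x, (m x : ℂ) ≠ 0 := fun x => by
    exact_mod_cast (ne_of_gt (hpos x))
  set A : ℂ := innerM m (lapDelta m b f) f with hA
  set N : ℝ := ∑ x, m x * Complex.normSq (f x) with hN
  -- innerM m f f = N
  have hff : innerM m f f = (N : ℂ) := by
    rw [innerM, hN]
    push_cast
    refine Finset.sum_congr rfl fun x _ => ?_
    rw [mul_assoc, Complex.mul_conj]
  have hNpos : 0 < N := by
    obtain ⟨x0, hx0⟩ : ∃ x, f x ≠ 0 := by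
      by_contra h
      push_neg at h
      exact hf0 (funext h)
    refine Finset.sum_pos' (fun x _ => mul_nonneg (le_of_lt (hpos x)) (Complex.normSq_nonneg _)) ?_
    exact ⟨x0, Finset.mem_univ _,
      mul_pos (hpos x0) (Complex.normSq_pos.mpr hx0)⟩
  -- A expanded
  have hAexp : A = ∑ x, ∑ y, ((b x y : ℝ) : ℂ) * ((f x - f y) * (starRingEnd ℂ) (f x)) := by
    rw [hA, innerM]
    refine Finset.sum_congr rfl fun x _ => ?_
    rw [lapDelta]
    rw [show (m x : ℂ) * ((1 / (m x : ℂ)) * ∑ y, ((b x y : ℝ) : ℂ) * (f x - f y)) * (starRingEnd ℂ) (f x)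
        = ((m x : ℂ) * (1 / (m x : ℂ))) * ((∑ y, ((b x y : ℝ) : ℂ) * (f x - f y)) * (starRingEnd ℂ) (f x)) by ring]
    rw [mul_one_div_cancel (hmne x), one_mul, Finset.sum_mul]
    exact Finset.sum_congr rfl fun y _ => by ring
  -- A.re formula
  have hAre : A.re = ∑ x, ∑ y, b x y * (Complex.normSq (f x) - (f y * (starRingEnd ℂ) (f x)).re) := by
    rw [hAexp, Complex.re_sum]
    refine Finset.sum_congr rfl fun x _ => ?_
    rw [Complex.re_sum]
    refine Finset.sum_congr rfl fun y _ => ?_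
    rw [Complex.re_ofReal_mul]
    congr 1
    rw [sub_mul, Complex.sub_re, Complex.mul_conj]
    simp
  -- bound on cross term
  have hq : ∀ x y : V, |(f y * (starRingEnd ℂ) (f x)).re|
      ≤ (Complex.normSq (f x) + Complex.normSq (f y)) / 2 := by
    intro x y
    have h1 : |(f y * (starRingEnd ℂ) (f x)).re| ≤ ‖f y * (starRingEnd ℂ) (f x)‖ :=
      Complex.abs_re_le_norm _
    rw [norm_mul, Complex.norm_conj] at h1
    refine h1.trans ?_
    have h2 : ‖f y‖ * ‖f x‖
        ≤ (‖f x‖^2 + ‖f y‖^2) / 2 := by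
      nlinarith [sq_nonneg (‖f x‖ - ‖f y‖)]
    rw [Complex.sq_norm, Complex.sq_norm] at h2
    exact h2
  have hK := kirch_sum b hkirch (fun x => Complex.normSq (f x))
  have hNsum : N = ∑ x, ∑ y, b x y * Complex.normSq (f x) := by
    rw [hN]
    refine Finset.sum_congr rfl fun x _ => ?_
    rw [hm, Finset.sum_mul]
  -- 0 ≤ A.re
  have hAre0 : 0 ≤ A.re := by
    rw [hAre]
    have : (0:ℝ) = ∑ x, ∑ y, b x y * ((Complex.normSq (f x) - Complex.normSq (f y)) / 2) := by
      have : ∑ x, ∑ y, b x y * ((Complex.normSq (f x) - Complex.normSq (f y)) / 2)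
          = (∑ x, ∑ y, b x y * Complex.normSq (f x) - ∑ x, ∑ y, b x y * Complex.normSq (f y)) / 2 := by
        rw [← Finset.sum_sub_distrib]
        rw [Finset.sum_div]
        refine Finset.sum_congr rfl fun x _ => ?_
        rw [← Finset.sum_sub_distrib, Finset.sum_div]
        refine Finset.sum_congr rfl fun y _ => by ring
      rw [this, hK, sub_self, zero_div]
    rw [this]
    refine Finset.sum_le_sum fun x _ => Finset.sum_le_sum fun y _ => ?_
    refine mul_le_mul_of_nonneg_left ?_ (hb x y)
    have := (abs_le.mp (hq x y)).2
    linarith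
  -- A.re ≤ 2N
  have hAre2 : A.re ≤ 2 * N := by
    rw [hAre]
    have h2N : 2 * N = ∑ x, ∑ y, b x y *
        (Complex.normSq (f x) + (Complex.normSq (f x) + Complex.normSq (f y)) / 2) := by
      have : ∑ x, ∑ y, b x y *
          (Complex.normSq (f x) + (Complex.normSq (f x) + Complex.normSq (f y)) / 2)
          = (3/2) * (∑ x, ∑ y, b x y * Complex.normSq (f x))
            + (1/2) * (∑ x, ∑ y, b x y * Complex.normSq (f y)) := by
        rw [Finset.mul_sum, Finset.mul_sum, ← Finset.sum_add_distrib]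
        refine Finset.sum_congr rfl fun x _ => ?_
        rw [Finset.mul_sum, Finset.mul_sum, ← Finset.sum_add_distrib]
        refine Finset.sum_congr rfl fun y _ => by ring
      rw [this, hK, hNsum]; ring
    rw [h2N]
    refine Finset.sum_le_sum fun x _ => Finset.sum_le_sum fun y _ => ?_
    refine mul_le_mul_of_nonneg_left ?_ (hb x y)
    have := (abs_le.mp (hq x y)).1
    linarith
  -- inner product identities
  have hTf : innerM m (T f) f = (starRingEnd ℂ) A := by
    rw [innerM_conj, ← hT f f, ← hA]
  have hSff : innerM m (S f) f = A + (starRingEnd ℂ) A := by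
    rw [← hTf, hA, innerM, innerM, innerM, ← Finset.sum_add_distrib]
    refine Finset.sum_congr rfl fun x _ => ?_
    rw [hS f x]
    ring
  have hSff2 : innerM m (S f) f = mu * (N : ℂ) := by
    rw [hfe, innerM, ← hff, innerM, Finset.mul_sum]
    exact Finset.sum_congr rfl fun x _ => by ring
  have hmuN : mu * (N : ℂ) = ((2 * A.re : ℝ) : ℂ) := by
    rw [← hSff2, hSff, Complex.add_conj]
  have hNne : (N : ℂ) ≠ 0 := by exact_mod_cast (ne_of_gt hNpos)
  have hmu : mu = ((2 * A.re / N : ℝ) : ℂ) := by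
    rw [Complex.ofReal_div, eq_div_iff hNne]
    exact hmuN
  rw [hmu]
  refine ⟨Complex.ofReal_im _, ?_, ?_⟩
  · rw [Complex.ofReal_re]
    positivity
  · rw [Complex.ofReal_re]
    rw [div_le_iff₀ hNpos]
    linarith
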